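/- Let $h>0$, $\alpha\in(0,2)$, and let $\mu_\alpha$ be the 1D symmetric stable density with $\mu_\alpha(v)\sim \langle v\rangle^{-1-\alpha}$. Set $M_j=\mu_\alpha(jh)$ and let $\beta_k^h$ satisfy $b_\alpha|hk|^{-1-\alpha}\le\beta_k^h\le B_\alpha|hk|^{-1-\alpha}$. Then the double sum $\widetilde S := \sum_{k\in\mathbb{Z}}\sum_{\ell\in\mathbb{Z}^*}\beta_\ell^h\,|2M_k-M_{k+\ell}-M_{k-\ell}|\,h^2$ is bounded by a constant depending only on $\alpha$ (uniformly in $h\le 1$), and consequently $\sum_{k\in\mathbb{Z}}\sum_{\ell\in\mathbb{Z}^*}\beta_\ell^h(2M_k-M_{k+\ell}-M_{k-\ell})h^2=0$. -/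

import Mathlib

open Real

/-- Japanese bracket `⟨x⟩ = (1+x²)^{1/2}`. -/
noncomputable def jbr (x : ℝ) : ℝ := Real.sqrt (1 + x ^ 2)

lemma jbr_one_le (x : ℝ) : 1 ≤ jbr x := by
  have := Real.sqrt_le_sqrt (show (1:ℝ) ≤ 1 + x ^ 2 by nlinarith [sq_nonneg x])
  simpa [jbr] using this

lemma jbr_pos (x : ℝ) : 0 < jbr x := lt_of_lt_of_le one_pos (jbr_one_le x)

lemma abs_le_jbr (x : ℝ) : |x| ≤ jbr x := by
  rw [jbr, ← Real.sqrt_sq_eq_abs]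
  exact Real.sqrt_le_sqrt (by nlinarith)

lemma jbr_neg (x : ℝ) : jbr (-x) = jbr x := by simp [jbr]

lemma jbr_le_two_mul (x t : ℝ) (ht : |t| ≤ 1) : jbr x ≤ 2 * jbr (x + t) := by
  have h1 : jbr x ^ 2 = 1 + x ^ 2 := Real.sq_sqrt (by positivity)
  have h2 : jbr (x+t) ^ 2 = 1 + (x+t) ^ 2 := Real.sq_sqrt (by positivity)
  have ht2 : t ^ 2 ≤ 1 := by
    rw [← sq_abs]; nlinarith [abs_nonneg t]
  nlinarith [jbr_pos x, jbr_pos (x+t), sq_nonneg (3*x + 4*t)]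

-- MVT for rpow on [a, a+1]
lemma mvt_rpow (p : ℝ) {a : ℝ} (ha : 0 < a) :
    ∃ c, a < c ∧ c < a + 1 ∧ (a+1) ^ p - a ^ p = p * c ^ (p - 1) := by
  have hab : a < a + 1 := by linarith
  have hcont : ContinuousOn (fun x : ℝ => x ^ p) (Set.Icc a (a+1)) := by
    intro x hx
    exact (Real.continuousAt_rpow_const x p (Or.inl (ne_of_gt (lt_of_lt_of_le ha hx.1)))).continuousWithinAt
  have hdiff : ∀ x ∈ Set.Ioo a (a+1), HasDerivAt (fun x : ℝ => x ^ p) (p * x ^ (p-1)) x := by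
    intro x hx
    exact Real.hasDerivAt_rpow_const (Or.inl (ne_of_gt (lt_trans ha hx.1)))
  obtain ⟨c, hc, hceq⟩ := exists_hasDerivAt_eq_slope (fun x : ℝ => x ^ p)
    (fun x => p * x ^ (p-1)) hab hcont hdiff
  refine ⟨c, hc.1, hc.2, ?_⟩
  rw [hceq]; field_simp; ring

lemma rpow_tail_step {s : ℝ} (hs : 0 < s) {a : ℝ} (ha : 0 < a) :
    s * (a+1) ^ (-(1+s)) ≤ a ^ (-s) - (a+1) ^ (-s) := by
  obtain ⟨c, hc1, hc2, heq⟩ := mvt_rpow (-s) ha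
  have hcpos : 0 < c := lt_trans ha hc1
  have hmono : (a+1) ^ (-s-1) ≤ c ^ (-s-1) :=
    Real.rpow_le_rpow_of_nonpos hcpos (le_of_lt hc2) (by linarith)
  have h2 : a ^ (-s) - (a+1) ^ (-s) = s * c ^ (-s-1) := by
    have h3 : (-s) * c ^ (-s-1) = -(s * c ^ (-s-1)) := by ring
    rw [h3] at heq; linarith
  rw [h2, show -(1+s) = -s-1 by ring]
  exact mul_le_mul_of_nonneg_left hmono (le_of_lt hs)

lemma head_step_le {q : ℝ} (hq : 1 ≤ q) {a : ℝ} (ha : 0 < a) :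
    q * a ^ (q-1) ≤ (a+1) ^ q - a ^ q := by
  obtain ⟨c, hc1, hc2, heq⟩ := mvt_rpow q ha
  rw [heq]
  exact mul_le_mul_of_nonneg_left
    (Real.rpow_le_rpow (le_of_lt ha) (le_of_lt hc1) (by linarith)) (by linarith)

lemma head_step_ge {q : ℝ} (hq0 : 0 < q) (hq : q ≤ 1) {a : ℝ} (ha : 0 < a) :
    q * (a+1) ^ (q-1) ≤ (a+1) ^ q - a ^ q := by
  obtain ⟨c, hc1, hc2, heq⟩ := mvt_rpow q ha
  rw [heq]
  exact mul_le_mul_of_nonneg_left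
    (Real.rpow_le_rpow_of_nonpos (lt_trans ha hc1) (le_of_lt hc2) (by linarith)) (by linarith)

lemma tail_finsum {s : ℝ} (hs : 0 < s) (N : ℕ) (hN : 1 ≤ N) (m : ℕ) :
    s * ∑ n ∈ Finset.range m, ((N:ℝ)+1+n) ^ (-(1+s)) ≤ (N:ℝ) ^ (-s) - ((N:ℝ)+m) ^ (-s) := by
  have hNpos : (0:ℝ) < N := by exact_mod_cast hN
  induction m with
  | zero => simp
  | succ m ih =>
    rw [Finset.sum_range_succ, mul_add]
    have ha : (0:ℝ) < (N:ℝ) + m := by positivity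
    have hstep := rpow_tail_step hs ha
    have hcast : ((N:ℝ)+1+m) = ((N:ℝ)+m)+1 := by ring
    have hcast2 : ((N:ℝ)+(m+1:ℕ)) = ((N:ℝ)+m)+1 := by push_cast; ring
    rw [hcast, hcast2]
    linarith

lemma tail_summable {s : ℝ} (hs : 0 < s) (N : ℕ) :
    Summable (fun n : ℕ => ((N:ℝ)+1+n) ^ (-(1+s))) := by
  have h1 : Summable (fun n : ℕ => ((n:ℝ)) ^ (-(1+s))) :=
    Real.summable_nat_rpow.mpr (by linarith)
  have h2 := (summable_nat_add_iff (N+1)).mpr h1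
  apply h2.congr
  intro n
  congr 1
  push_cast
  ring

lemma tail_tsum {s : ℝ} (hs : 0 < s) (N : ℕ) (hN : 1 ≤ N) :
    ∑' n : ℕ, ((N:ℝ)+1+n) ^ (-(1+s)) ≤ (N:ℝ) ^ (-s)/s := by
  apply Summable.tsum_le_of_sum_le (tail_summable hs N)
  intro u
  obtain ⟨m, hm⟩ := u.exists_nat_subset_range
  rw [le_div_iff₀ hs]
  calc (∑ n ∈ u, ((N:ℝ)+1+n) ^ (-(1+s))) * s
      ≤ (∑ n ∈ Finset.range m, ((N:ℝ)+1+n) ^ (-(1+s))) * s := by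
        apply mul_le_mul_of_nonneg_right
          (Finset.sum_le_sum_of_subset_of_nonneg hm (fun i _ _ => by positivity)) (le_of_lt hs)
    _ ≤ (N:ℝ) ^ (-s) - ((N:ℝ)+m) ^ (-s) := by
        rw [mul_comm]; exact tail_finsum hs N hN m
    _ ≤ (N:ℝ) ^ (-s) := by
        have : (0:ℝ) ≤ ((N:ℝ)+m) ^ (-s) := Real.rpow_nonneg (by positivity) _
        linarith

lemma head_finsum {α : ℝ} (hα0 : 0 < α) (hα2 : α < 2) (N : ℕ) (hN : 1 ≤ N) :
    ∑ n ∈ Finset.range N, ((n:ℝ)+1) ^ (1-α) ≤ (5/(2-α)+1) * (N:ℝ) ^ (2-α) := by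
  set q : ℝ := 2 - α with hq
  have hq0 : 0 < q := by simp [hq]; linarith
  have hNpos : (0:ℝ) < N := by exact_mod_cast hN
  have hN1 : (1:ℝ) ≤ N := by exact_mod_cast hN
  have hNq1 : 1 ≤ (N:ℝ) ^ q := Real.one_le_rpow (by exact_mod_cast hN) (le_of_lt hq0)
  have hexp : (1:ℝ) - α = q - 1 := by rw [hq]; ring
  rw [hexp]
  rcases le_or_gt 1 q with hq1 | hq1
  · -- forward telescoping
    have key : ∀ m : ℕ, q * ∑ n ∈ Finset.range m, ((n:ℝ)+1) ^ (q-1) ≤ ((m:ℝ)+1) ^ q - 1 := by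
      intro m
      induction m with
      | zero => simp
      | succ m ih =>
        rw [Finset.sum_range_succ, mul_add]
        have hstep := head_step_le hq1 (show (0:ℝ) < (m:ℝ)+1 by positivity)
        have hc : ((m+1:ℕ):ℝ) + 1 = ((m:ℝ)+1)+1 := by push_cast; ring
        rw [hc]
        linarith
    have h2 : ((N:ℝ)+1) ^ q ≤ 4 * (N:ℝ) ^ q := by
      have h3 : ((N:ℝ)+1) ^ q ≤ (2*(N:ℝ)) ^ q :=
        Real.rpow_le_rpow (by positivity) (by linarith) (le_of_lt hq0)
      have h4 : (2*(N:ℝ)) ^ q = 2 ^ q * (N:ℝ) ^ q := Real.mul_rpow (by norm_num) (by positivity)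
      have h5 : (2:ℝ) ^ q ≤ 2 ^ (2:ℝ) :=
        Real.rpow_le_rpow_of_exponent_le (by norm_num) (by simp [hq]; linarith)
      have h6 : (2:ℝ) ^ (2:ℝ) = 4 := by
        rw [show (2:ℝ) = ((2:ℕ):ℝ) by norm_num, Real.rpow_natCast]; norm_num
      have hNq : (0:ℝ) ≤ (N:ℝ) ^ q := Real.rpow_nonneg (by positivity) _
      calc ((N:ℝ)+1) ^ q ≤ 2 ^ q * (N:ℝ) ^ q := by rw [← h4]; exact h3
        _ ≤ 4 * (N:ℝ) ^ q := by nlinarith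
    have hkey := key N
    have hr : q * ((5/q+1) * (N:ℝ) ^ q) = (5 + q) * (N:ℝ) ^ q := by field_simp
    have hNq : (0:ℝ) ≤ (N:ℝ) ^ q := Real.rpow_nonneg (by positivity) _
    have : q * (∑ n ∈ Finset.range N, ((n:ℝ)+1) ^ (q-1)) ≤ q * ((5/q+1) * (N:ℝ) ^ q) := by
      rw [hr]; nlinarith
    exact le_of_mul_le_mul_left this hq0
  · -- backward telescoping
    have key : ∀ m : ℕ, 1 ≤ m → q * ∑ n ∈ Finset.range m, ((n:ℝ)+1) ^ (q-1) ≤ q + (m:ℝ) ^ q - 1 := by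
      intro m hm
      induction m, hm using Nat.le_induction with
      | base => simp [Real.one_rpow]
      | succ m hm ih =>
        rw [Finset.sum_range_succ, mul_add]
        have hmpos : (0:ℝ) < (m:ℝ) := by exact_mod_cast hm
        have hstep := head_step_ge hq0 (le_of_lt hq1) hmpos
        have hc : ((m+1:ℕ):ℝ) = (m:ℝ)+1 := by push_cast; ring
        have hc2 : ((m:ℕ):ℝ) + 1 = (m:ℝ)+1 := rfl
        rw [hc, hc2]
        linarith
    have hkey := key N hN
    have hr : q * ((5/q+1) * (N:ℝ) ^ q) = (5 + q) * (N:ℝ) ^ q := by field_simp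
    have hNq : (0:ℝ) ≤ (N:ℝ) ^ q := Real.rpow_nonneg (by positivity) _
    have : q * (∑ n ∈ Finset.range N, ((n:ℝ)+1) ^ (q-1)) ≤ q * ((5/q+1) * (N:ℝ) ^ q) := by
      rw [hr]; nlinarith
    exact le_of_mul_le_mul_left this hq0

section HB
variable {α h : ℝ} (hα0 : 0 < α) (hα2 : α < 2) (h0 : 0 < h) (h1 : h ≤ 1)

-- basic facts about N = ⌈1/h⌉₊
lemma Nceil_facts (h0 : 0 < h) (h1 : h ≤ 1) :
    1 ≤ ⌈1/h⌉₊ ∧ 1/h ≤ (⌈1/h⌉₊:ℝ) ∧ ((⌈1/h⌉₊:ℕ):ℝ) ≤ 2/h := by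
  have hinv : (1:ℝ) ≤ 1/h := by rw [le_div_iff₀ h0]; linarith
  refine ⟨?_, Nat.le_ceil _, ?_⟩
  · exact_mod_cast Nat.one_le_ceil_iff.mpr (by linarith)
  · have := Nat.ceil_lt_add_one (show (0:ℝ) ≤ 1/h by positivity)
    have h2 : 1/h + 1 ≤ 2/h := by
      rw [div_add' _ _ _ (ne_of_gt h0), div_le_div_iff₀ h0 h0]; nlinarith
    linarith

-- N^(-α) ≤ h^α
lemma Nceil_rpow (hα0 : 0 < α) (h0 : 0 < h) (h1 : h ≤ 1) :
    ((⌈1/h⌉₊:ℕ):ℝ) ^ (-α) ≤ h ^ α := by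
  obtain ⟨hN1, hN2, hN3⟩ := Nceil_facts h0 h1
  have hpos : (0:ℝ) < 1/h := by positivity
  have := Real.rpow_le_rpow_of_nonpos hpos hN2 (neg_nonpos.mpr (le_of_lt hα0))
  calc ((⌈1/h⌉₊:ℕ):ℝ) ^ (-α) ≤ (1/h) ^ (-α) := this
    _ = h ^ α := by
        rw [one_div, ← Real.rpow_neg_one h, ← Real.rpow_mul (le_of_lt h0)]
        norm_num

end HB

section W
variable {α h : ℝ}

lemma jbr_rpow_le_one (hα0 : 0 < α) (x : ℝ) : jbr x ^ (-(1+α)) ≤ 1 :=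
  Real.rpow_le_one_of_one_le_of_nonpos (jbr_one_le x) (by linarith)

lemma jbr_rpow_le (hα0 : 0 < α) {x : ℝ} (hx : 0 < x) :
    jbr x ^ (-(1+α)) ≤ x ^ (-(1+α)) :=
  Real.rpow_le_rpow_of_nonpos hx (le_trans (le_abs_self x) (abs_le_jbr x)) (by linarith)

lemma sumf (hα0 : 0 < α) (hα2 : α < 2) (h0 : 0 < h) (h1 : h ≤ 1) :
    Summable (fun n : ℕ => jbr ((n:ℝ)*h) ^ (-(1+α))) ∧
      ∑' n : ℕ, jbr ((n:ℝ)*h) ^ (-(1+α)) ≤ (3 + 1/α)/h := by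
  set f : ℕ → ℝ := fun n => jbr ((n:ℝ)*h) ^ (-(1+α)) with hf
  set N := ⌈1/h⌉₊ with hN
  obtain ⟨hN1, hN2, hN3⟩ := Nceil_facts h0 h1
  have hinv : (1:ℝ) ≤ 1/h := by rw [le_div_iff₀ h0]; linarith
  have hfpos : ∀ n, 0 ≤ f n := fun n => Real.rpow_nonneg (le_of_lt (jbr_pos _)) _
  have htailpt : ∀ n : ℕ, f (n+(N+1)) ≤ h ^ (-(1+α)) * ((N:ℝ)+1+n) ^ (-(1+α)) := by
    intro n
    have hx : ((n+(N+1):ℕ):ℝ)*h = ((N:ℝ)+1+n)*h := by push_cast; ring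
    have hxpos : (0:ℝ) < ((N:ℝ)+1+n)*h := by positivity
    calc f (n+(N+1)) ≤ (((N:ℝ)+1+n)*h) ^ (-(1+α)) := by
          rw [hf]; simp only []; rw [hx]; exact jbr_rpow_le hα0 hxpos
      _ = h ^ (-(1+α)) * ((N:ℝ)+1+n) ^ (-(1+α)) := by
          rw [Real.mul_rpow (by positivity) (le_of_lt h0), mul_comm]
  have hmaj : Summable (fun n : ℕ => h ^ (-(1+α)) * ((N:ℝ)+1+n) ^ (-(1+α))) :=
    (tail_summable hα0 N).mul_left _
  have htail_summ : Summable (fun n : ℕ => f (n+(N+1))) :=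
    Summable.of_nonneg_of_le (fun n => hfpos _) htailpt hmaj
  have hfsumm : Summable f := (summable_nat_add_iff (N+1)).mp htail_summ
  refine ⟨hfsumm, ?_⟩
  rw [← Summable.sum_add_tsum_nat_add (N+1) hfsumm]
  have hb1 : ∑ i ∈ Finset.range (N+1), f i ≤ 3/h := by
    calc ∑ i ∈ Finset.range (N+1), f i ≤ (N+1) * 1 := by
          rw [← Finset.card_range (N+1)] 
          have := Finset.sum_le_card_nsmul (Finset.range (N+1)) f 1
            (fun i _ => jbr_rpow_le_one hα0 _)
          simpa [nsmul_eq_mul] using this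
      _ ≤ 3/h := by
          push_cast
          have : (2:ℝ)/h + 1 ≤ 3/h := by
            rw [div_add' _ _ _ (ne_of_gt h0), div_le_div_iff₀ h0 h0]; nlinarith
          linarith
  have hb2 : ∑' n : ℕ, f (n+(N+1)) ≤ 1/(α*h) := by
    calc ∑' n : ℕ, f (n+(N+1))
        ≤ ∑' n : ℕ, h ^ (-(1+α)) * ((N:ℝ)+1+n) ^ (-(1+α)) :=
          Summable.tsum_le_tsum htailpt htail_summ hmaj
      _ = h ^ (-(1+α)) * ∑' n : ℕ, ((N:ℝ)+1+n) ^ (-(1+α)) := tsum_mul_left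
      _ ≤ h ^ (-(1+α)) * ((N:ℝ) ^ (-α)/α) := by
          gcongr
          exact tail_tsum hα0 N hN1
      _ ≤ h ^ (-(1+α)) * (h ^ α/α) := by
          gcongr
          exact Nceil_rpow hα0 h0 h1
      _ = 1/(α*h) := by
          rw [div_eq_mul_inv, ← mul_assoc, ← Real.rpow_add h0,
            show -(1+α)+α = -1 by ring, Real.rpow_neg_one]
          rw [one_div, mul_inv]; ring
  have hsplit : (3 + 1/α)/h = 3/h + 1/(α*h) := by field_simp
  linarith
end W
section WZ
variable {α h : ℝ}

lemma sumW (hα0 : 0 < α) (hα2 : α < 2) (h0 : 0 < h) (h1 : h ≤ 1) :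
    Summable (fun k : ℤ => jbr ((k:ℝ)*h) ^ (-(1+α))) ∧
      ∑' k : ℤ, jbr ((k:ℝ)*h) ^ (-(1+α)) ≤ (6 + 2/α)/h := by
  obtain ⟨hfsumm, hfbd⟩ := sumf hα0 hα2 h0 h1
  set f : ℕ → ℝ := fun n => jbr ((n:ℝ)*h) ^ (-(1+α)) with hfdef
  set F : ℤ → ℝ := fun k => jbr ((k:ℝ)*h) ^ (-(1+α)) with hFdef
  have hnat : (fun n : ℕ => F n) = f := by
    funext n; simp only [hFdef, hfdef, Int.cast_natCast]
  have hneg : (fun n : ℕ => F (-(n+1))) = fun n : ℕ => f (n+1) := by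
    funext n
    simp only [hFdef, hfdef]
    rw [show (((-(n+1) : ℤ)):ℝ) * h = -((((n:ℝ)+1)) * h) by push_cast; ring,
      jbr_neg, show (((n+1 : ℕ)):ℝ) * h = (((n:ℝ)+1)) * h by push_cast; ring]
  have hshift : Summable (fun n : ℕ => f (n+1)) := (summable_nat_add_iff 1).mpr hfsumm
  have hFsumm : Summable F := by
    apply Summable.of_nat_of_neg_add_one (by rw [hnat]; exact hfsumm) (by rw [hneg]; exact hshift)
  refine ⟨hFsumm, ?_⟩
  have hfpos : ∀ n, 0 ≤ f n := fun n => Real.rpow_nonneg (le_of_lt (jbr_pos _)) _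
  have hsplit : ∑' n : ℕ, f (n+1) ≤ ∑' n : ℕ, f n := by
    have := (Summable.sum_add_tsum_nat_add 1 hfsumm (f := f)).symm
    have h00 : 0 ≤ ∑ i ∈ Finset.range 1, f i := Finset.sum_nonneg (fun i _ => hfpos i)
    calc ∑' n : ℕ, f (n+1) = ∑' n : ℕ, f (n+1) := rfl
      _ ≤ ∑ i ∈ Finset.range 1, f i + ∑' n : ℕ, f (n+1) := by linarith
      _ = ∑' n : ℕ, f n := Summable.sum_add_tsum_nat_add 1 hfsumm
  have htsum : ∑' k : ℤ, F k = ∑' n : ℕ, F n + ∑' n : ℕ, F (-(n+1)) :=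
    tsum_of_nat_of_neg_add_one (by rw [hnat]; exact hfsumm) (by rw [hneg]; exact hshift)
  rw [htsum, hnat, hneg]
  have : (6 + 2/α)/h = (3 + 1/α)/h + (3 + 1/α)/h := by field_simp; ring
  rw [this]
  have h2 : ∑' n : ℕ, f (n+1) ≤ (3 + 1/α)/h := le_trans hsplit hfbd
  linarith
end WZ

section V
variable {α h : ℝ}

lemma vpt_head (hα0 : 0 < α) {x : ℝ} (hx : 0 < x) :
    min (x^2) 1 * x ^ (-(1+α)) ≤ x ^ (1-α) := by
  have h1 : min (x^2) 1 ≤ x^2 := min_le_left _ _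
  have h2 : (0:ℝ) ≤ x ^ (-(1+α)) := Real.rpow_nonneg (le_of_lt hx) _
  calc min (x^2) 1 * x ^ (-(1+α)) ≤ x^2 * x ^ (-(1+α)) := mul_le_mul_of_nonneg_right h1 h2
    _ = x ^ (1-α) := by
        rw [← Real.rpow_natCast x 2, ← Real.rpow_add hx]
        congr 1
        push_cast
        ring
lemma vpt_tail {x : ℝ} (hx : 0 < x) :
    min (x^2) 1 * x ^ (-(1+α)) ≤ x ^ (-(1+α)) := by
  have h2 : (0:ℝ) ≤ x ^ (-(1+α)) := Real.rpow_nonneg (le_of_lt hx) _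
  have : min (x^2) 1 ≤ 1 := min_le_right _ _
  nlinarith
lemma vpt_nonneg {x : ℝ} (hx : 0 < x) : 0 ≤ min (x^2) 1 * x ^ (-(1+α)) := by
  have h2 : (0:ℝ) ≤ x ^ (-(1+α)) := Real.rpow_nonneg (le_of_lt hx) _
  have : (0:ℝ) ≤ min (x^2) 1 := le_min (by positivity) one_pos.le
  positivity

lemma sumV (hα0 : 0 < α) (hα2 : α < 2) (h0 : 0 < h) (h1 : h ≤ 1) :
    Summable (fun n : ℕ => min ((h*((n:ℝ)+1))^2) 1 * (h*((n:ℝ)+1)) ^ (-(1+α))) ∧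
      ∑' n : ℕ, min ((h*((n:ℝ)+1))^2) 1 * (h*((n:ℝ)+1)) ^ (-(1+α))
        ≤ (20/(2-α)+4+1/α)/h := by
  set g : ℕ → ℝ := fun n => min ((h*((n:ℝ)+1))^2) 1 * (h*((n:ℝ)+1)) ^ (-(1+α)) with hg
  set N := ⌈1/h⌉₊ with hN
  obtain ⟨hN1, hN2, hN3⟩ := Nceil_facts h0 h1
  have hinv : (1:ℝ) ≤ 1/h := by rw [le_div_iff₀ h0]; linarith
  have hxpos : ∀ n : ℕ, (0:ℝ) < h*((n:ℝ)+1) := fun n => by positivity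
  have hgpos : ∀ n, 0 ≤ g n := fun n => vpt_nonneg (hxpos n)
  have htailpt : ∀ n : ℕ, g (n+N) ≤ h ^ (-(1+α)) * ((N:ℝ)+1+n) ^ (-(1+α)) := by
    intro n
    have hc : h*(((n+N:ℕ):ℝ)+1) = h*((N:ℝ)+1+n) := by push_cast; ring
    have hpos2 : (0:ℝ) < h*((N:ℝ)+1+n) := by positivity
    calc g (n+N) ≤ (h*(((n+N:ℕ):ℝ)+1)) ^ (-(1+α)) := vpt_tail (hxpos _)
      _ = h ^ (-(1+α)) * ((N:ℝ)+1+n) ^ (-(1+α)) := by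
          rw [hc, Real.mul_rpow (le_of_lt h0) (by positivity)]
  have hmaj : Summable (fun n : ℕ => h ^ (-(1+α)) * ((N:ℝ)+1+n) ^ (-(1+α))) :=
    (tail_summable hα0 N).mul_left _
  have htail_summ : Summable (fun n : ℕ => g (n+N)) :=
    Summable.of_nonneg_of_le (fun n => hgpos _) htailpt hmaj
  have hgsumm : Summable g := (summable_nat_add_iff N).mp htail_summ
  refine ⟨hgsumm, ?_⟩
  rw [← Summable.sum_add_tsum_nat_add N hgsumm]
  have hhead : ∑ n ∈ Finset.range N, g n ≤ (20/(2-α)+4)/h := by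
    have hpt : ∀ n ∈ Finset.range N, g n ≤ h ^ (1-α) * ((n:ℝ)+1) ^ (1-α) := by
      intro n _
      calc g n ≤ (h*((n:ℝ)+1)) ^ (1-α) := vpt_head hα0 (hxpos n)
        _ = h ^ (1-α) * ((n:ℝ)+1) ^ (1-α) := Real.mul_rpow (le_of_lt h0) (by positivity)
    calc ∑ n ∈ Finset.range N, g n ≤ ∑ n ∈ Finset.range N, h ^ (1-α) * ((n:ℝ)+1) ^ (1-α) :=
          Finset.sum_le_sum hpt
      _ = h ^ (1-α) * ∑ n ∈ Finset.range N, ((n:ℝ)+1) ^ (1-α) := by rw [Finset.mul_sum]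
      _ ≤ h ^ (1-α) * ((5/(2-α)+1) * (N:ℝ) ^ (2-α)) := by
          gcongr
          exact head_finsum hα0 hα2 N hN1
      _ ≤ (20/(2-α)+4)/h := by
          have hb : (N:ℝ) ^ (2-α) ≤ 4 * (1/h) ^ (2-α) := by
            calc (N:ℝ) ^ (2-α) ≤ (2*(1/h)) ^ (2-α) := by
                  apply Real.rpow_le_rpow (by positivity) _ (by linarith)
                  rw [show 2*(1/h) = 2/h by ring]; exact hN3
              _ = 2 ^ (2-α) * (1/h) ^ (2-α) := Real.mul_rpow (by norm_num) (by positivity)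
              _ ≤ 4 * (1/h) ^ (2-α) := by
                  have : (2:ℝ) ^ (2-α) ≤ 2 ^ (2:ℝ) :=
                    Real.rpow_le_rpow_of_exponent_le (by norm_num) (by linarith)
                  have h4 : (2:ℝ) ^ (2:ℝ) = 4 := by
                    rw [show (2:ℝ) = ((2:ℕ):ℝ) from by norm_num]
                    rw [Real.rpow_natCast]; norm_num
                  have hxn : (0:ℝ) ≤ (1/h) ^ (2-α) := Real.rpow_nonneg (by positivity) _
                  nlinarith
          have hkey : h ^ (1-α) * (1/h) ^ (2-α) = 1/h := by
            rw [one_div, ← Real.rpow_neg_one h, ← Real.rpow_mul (le_of_lt h0),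
              ← Real.rpow_add h0]
            norm_num
          have hc1 : (0:ℝ) < 5/(2-α)+1 := by
            have : (0:ℝ) < 2-α := by linarith
            positivity
          calc h ^ (1-α) * ((5/(2-α)+1) * (N:ℝ) ^ (2-α))
              ≤ h ^ (1-α) * ((5/(2-α)+1) * (4 * (1/h) ^ (2-α))) := by gcongr
            _ = (5/(2-α)+1) * 4 * (h ^ (1-α) * (1/h) ^ (2-α)) := by ring
            _ = (5/(2-α)+1) * 4 * (1/h) := by rw [hkey]
            _ = (20/(2-α)+4)/h := by field_simp; ring
  have htail : ∑' n : ℕ, g (n+N) ≤ 1/(α*h) := by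
    calc ∑' n : ℕ, g (n+N)
        ≤ ∑' n : ℕ, h ^ (-(1+α)) * ((N:ℝ)+1+n) ^ (-(1+α)) := Summable.tsum_le_tsum htailpt htail_summ hmaj
      _ = h ^ (-(1+α)) * ∑' n : ℕ, ((N:ℝ)+1+n) ^ (-(1+α)) := tsum_mul_left
      _ ≤ h ^ (-(1+α)) * ((N:ℝ) ^ (-α)/α) := by
          gcongr
          exact tail_tsum hα0 N hN1
      _ ≤ h ^ (-(1+α)) * (h ^ α/α) := by
          gcongr
          exact Nceil_rpow hα0 h0 h1
      _ = 1/(α*h) := by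
          rw [div_eq_mul_inv, ← mul_assoc, ← Real.rpow_add h0,
            show -(1+α)+α = -1 by ring, Real.rpow_neg_one]
          rw [one_div, mul_inv]; ring
  have hsplit : (20/(2-α)+4+1/α)/h = (20/(2-α)+4)/h + 1/(α*h) := by field_simp
  linarith
end V

section UZ
variable {α h : ℝ}

lemma sumU (hα0 : 0 < α) (hα2 : α < 2) (h0 : 0 < h) (h1 : h ≤ 1) :
    Summable (fun ℓ : ℤ => if ℓ = 0 then (0:ℝ) else
        min (|h*(ℓ:ℝ)|^2) 1 * |h*(ℓ:ℝ)| ^ (-(1+α))) ∧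
      ∑' ℓ : ℤ, (if ℓ = 0 then (0:ℝ) else min (|h*(ℓ:ℝ)|^2) 1 * |h*(ℓ:ℝ)| ^ (-(1+α)))
        ≤ (2*(20/(2-α)+4+1/α))/h := by
  obtain ⟨hgsumm, hgbd⟩ := sumV hα0 hα2 h0 h1
  set g : ℕ → ℝ := fun n => min ((h*((n:ℝ)+1))^2) 1 * (h*((n:ℝ)+1)) ^ (-(1+α)) with hgdef
  set u : ℤ → ℝ := fun ℓ => if ℓ = 0 then (0:ℝ) else
    min (|h*(ℓ:ℝ)|^2) 1 * |h*(ℓ:ℝ)| ^ (-(1+α)) with hudef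
  have habs : ∀ n : ℕ, |h*(((n+1:ℕ):ℤ):ℝ)| = h*((n:ℝ)+1) := by
    intro n
    rw [abs_of_pos (by push_cast; positivity)]
    push_cast; ring
  have habsneg : ∀ n : ℕ, |h*((-(n+1:ℤ)):ℝ)| = h*((n:ℝ)+1) := by
    intro n
    rw [show h*((-(n+1:ℤ)):ℝ) = -(h*((n:ℝ)+1)) by push_cast; ring, abs_neg,
      abs_of_pos (by positivity)]
  have hnat1 : (fun n : ℕ => u ((n:ℤ)+1)) = g := by
    funext n
    have : ((n:ℤ)+1) ≠ 0 := by positivity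
    simp only [hudef, hgdef, if_neg this]
    rw [show ((n:ℤ)+1) = (((n+1:ℕ):ℤ)) by push_cast; ring, habs n]
  have hneg : (fun n : ℕ => u (-((n:ℤ)+1))) = g := by
    funext n
    have hne : (-((n:ℤ)+1)) ≠ 0 := by omega
    simp only [hudef, hgdef, if_neg hne]
    push_cast
    rw [show h * -((n:ℝ)+1) = -(h*((n:ℝ)+1)) by ring, abs_neg,
      abs_of_pos (by positivity)]
  have hcast : ∀ n:ℕ, (((n+1:ℕ)):ℤ) = (n:ℤ)+1 := by intro n; push_cast; ring
  have hnat_eq : (fun n : ℕ => u (((n+1:ℕ)):ℤ)) = g := by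
    funext n; rw [hcast n]; exact congrFun hnat1 n
  have hnat_summ : Summable (fun n : ℕ => u n) := by
    apply (summable_nat_add_iff 1).mp
    exact hnat_eq ▸ hgsumm
  have hneg_summ : Summable (fun n : ℕ => u (-((n:ℤ)+1))) := by rw [hneg]; exact hgsumm
  have husumm : Summable u := Summable.of_nat_of_neg_add_one hnat_summ hneg_summ
  refine ⟨husumm, ?_⟩
  have htsum := tsum_of_nat_of_neg_add_one hnat_summ hneg_summ
  have hnat_tsum : ∑' n : ℕ, u n ≤ (20/(2-α)+4+1/α)/h := by
    rw [Summable.tsum_eq_zero_add hnat_summ]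
    have hu0 : u ((0:ℕ):ℤ) = 0 := by simp [hudef]
    rw [hu0, zero_add]
    calc ∑' n : ℕ, u (((n+1:ℕ)):ℤ) = ∑' n : ℕ, g n := by rw [hnat_eq]
      _ ≤ (20/(2-α)+4+1/α)/h := hgbd
  have hneg_tsum : ∑' n : ℕ, u (-((n:ℤ)+1)) ≤ (20/(2-α)+4+1/α)/h := by
    rw [hneg]; exact hgbd
  rw [htsum]
  have : (2*(20/(2-α)+4+1/α))/h = (20/(2-α)+4+1/α)/h + (20/(2-α)+4+1/α)/h := by ring
  rw [this]
  exact add_le_add hnat_tsum hneg_tsum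
end UZ

lemma jbr_shift_rpow {α : ℝ} (hα0 : 0 < α) (hα2 : α < 2) {x t : ℝ} (ht : |t| ≤ 1) :
    jbr (x+t) ^ (-(3+α)) ≤ 32 * jbr x ^ (-(3+α)) := by
  have h2 : jbr x / 2 ≤ jbr (x+t) := by linarith [jbr_le_two_mul x t ht]
  have hpos : 0 < jbr x / 2 := by linarith [jbr_pos x]
  have h3 : jbr (x+t) ^ (-(3+α)) ≤ (jbr x / 2) ^ (-(3+α)) :=
    Real.rpow_le_rpow_of_nonpos hpos h2 (by linarith)
  have h4 : (jbr x / 2) ^ (-(3+α)) = jbr x ^ (-(3+α)) * 2 ^ (3+α) := by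
    rw [Real.div_rpow (le_of_lt (jbr_pos x)) (by norm_num), div_eq_mul_inv,
      ← Real.rpow_neg (by norm_num : (0:ℝ) ≤ 2), neg_neg]
  have h5 : (2:ℝ) ^ (3+α) ≤ 32 := by
    calc (2:ℝ) ^ (3+α) ≤ 2 ^ (5:ℝ) := Real.rpow_le_rpow_of_exponent_le (by norm_num) (by linarith)
      _ = 32 := by
          rw [show (5:ℝ) = ((5:ℕ):ℝ) from by norm_num, Real.rpow_natCast]; norm_num
  have h6 : 0 ≤ jbr x ^ (-(3+α)) := Real.rpow_nonneg (le_of_lt (jbr_pos x)) _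
  calc jbr (x+t) ^ (-(3+α)) ≤ jbr x ^ (-(3+α)) * 2 ^ (3+α) := by rw [← h4]; exact h3
    _ ≤ 32 * jbr x ^ (-(3+α)) := by nlinarith

lemma second_diff {μ : ℝ → ℝ} (hμreg : ContDiff ℝ 2 μ) {Cμ α : ℝ}
    (hα0 : 0 < α) (hα2 : α < 2) (hC : 0 ≤ Cμ)
    (hμ'' : ∀ v : ℝ, |deriv (deriv μ) v| ≤ Cμ * jbr v ^ (-(3 + α)))
    (x d : ℝ) (hd : |d| ≤ 1) :
    |2 * μ x - μ (x+d) - μ (x-d)| ≤ 64 * Cμ * d^2 * jbr x ^ (-(1+α)) := by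
  have hμd : Differentiable ℝ μ := hμreg.differentiable (by norm_num)
  have hμ1 : ContDiff ℝ 1 (deriv μ) := by
    have h2 : ContDiff ℝ ((1:ℕ) + 1) μ := by exact_mod_cast hμreg
    exact (contDiff_succ_iff_deriv.mp h2).2.2
  have hμd2 : Differentiable ℝ (deriv μ) := hμ1.differentiable (by norm_num)
  set g : ℝ → ℝ := fun t => μ (x+t) + μ (x-t) with hgdef
  set g1 : ℝ → ℝ := fun t => deriv μ (x+t) - deriv μ (x-t) with hg1def
  set g2 : ℝ → ℝ := fun t => deriv (deriv μ) (x+t) + deriv (deriv μ) (x-t) with hg2def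
  have hplus : ∀ (ν : ℝ → ℝ), Differentiable ℝ ν → ∀ t : ℝ,
      HasDerivAt (fun t => ν (x+t)) (deriv ν (x+t)) t := by
    intro ν hν t
    have := ((hν (x+t)).hasDerivAt).comp t ((hasDerivAt_id t).const_add x)
    simpa [Function.comp_def] using this
  have hminus : ∀ (ν : ℝ → ℝ), Differentiable ℝ ν → ∀ t : ℝ,
      HasDerivAt (fun t => ν (x-t)) (-deriv ν (x-t)) t := by
    intro ν hν t
    have := ((hν (x-t)).hasDerivAt).comp t ((hasDerivAt_id t).const_sub x)
    simpa [Function.comp_def] using this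
  have hg : ∀ t, HasDerivAt g (g1 t) t := by
    intro t
    have := (hplus μ hμd t).add (hminus μ hμd t)
    simpa [hgdef, hg1def, sub_eq_add_neg, Pi.add_def] using this
  have hg1 : ∀ t, HasDerivAt g1 (g2 t) t := by
    intro t
    have := (hplus (deriv μ) hμd2 t).sub (hminus (deriv μ) hμd2 t)
    simpa [hg2def, sub_neg_eq_add, Pi.sub_def] using this
  set M2 : ℝ := 64 * Cμ * jbr x ^ (-(1+α)) with hM2def
  have hjpos : 0 < jbr x ^ (-(1+α)) := Real.rpow_pos_of_pos (jbr_pos x) _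
  have hM2nonneg : 0 ≤ M2 := by positivity
  set D := |d| with hDdef
  have hD0 : 0 ≤ D := abs_nonneg d
  have hD1 : D ≤ 1 := hd
  have hbound2 : ∀ t ∈ Set.Icc (0:ℝ) D, ‖g2 t‖ ≤ M2 := by
    intro t ht
    obtain ⟨ht0, htD⟩ := ht
    have htabs : |t| ≤ 1 := by rw [abs_of_nonneg ht0]; linarith
    have htabs' : |(-t)| ≤ 1 := by rwa [abs_neg]
    have e1 : |deriv (deriv μ) (x+t)| ≤ Cμ * (32 * jbr x ^ (-(3+α))) := by
      calc |deriv (deriv μ) (x+t)| ≤ Cμ * jbr (x+t) ^ (-(3+α)) := hμ'' (x+t)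
        _ ≤ Cμ * (32 * jbr x ^ (-(3+α))) :=
            mul_le_mul_of_nonneg_left (jbr_shift_rpow hα0 hα2 htabs) hC
    have e2 : |deriv (deriv μ) (x-t)| ≤ Cμ * (32 * jbr x ^ (-(3+α))) := by
      calc |deriv (deriv μ) (x-t)| ≤ Cμ * jbr (x-t) ^ (-(3+α)) := hμ'' (x-t)
        _ ≤ Cμ * (32 * jbr x ^ (-(3+α))) := by
            apply mul_le_mul_of_nonneg_left _ hC
            have := jbr_shift_rpow hα0 hα2 (x := x) (t := -t) htabs'
            simpa [sub_eq_add_neg] using this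
    have e3 : jbr x ^ (-(3+α)) ≤ jbr x ^ (-(1+α)) :=
      Real.rpow_le_rpow_of_exponent_le (jbr_one_le x) (by linarith)
    have : ‖g2 t‖ ≤ |deriv (deriv μ) (x+t)| + |deriv (deriv μ) (x-t)| := by
      rw [hg2def]; exact abs_add_le _ _
    have h32 : 0 ≤ jbr x ^ (-(3+α)) := Real.rpow_nonneg (le_of_lt (jbr_pos x)) _
    rw [hM2def]
    nlinarith
  have hstep1 : ∀ t ∈ Set.Icc (0:ℝ) D, ‖g1 t‖ ≤ M2 * D := by
    intro t ht
    have key := (convex_Icc (0:ℝ) D).norm_image_sub_le_of_norm_hasDerivWithin_le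
      (f := g1) (f' := g2) (fun y hy => (hg1 y).hasDerivWithinAt) hbound2
      (Set.left_mem_Icc.mpr hD0) ht
    have hg10 : g1 0 = 0 := by simp [hg1def]
    rw [hg10, sub_zero] at key
    calc ‖g1 t‖ ≤ M2 * ‖t - 0‖ := key
      _ ≤ M2 * D := by
          apply mul_le_mul_of_nonneg_left _ hM2nonneg
          rw [sub_zero, Real.norm_eq_abs, abs_of_nonneg ht.1]
          exact ht.2
  have hstep2 : ‖g D - g 0‖ ≤ M2 * D * D := by
    have key := (convex_Icc (0:ℝ) D).norm_image_sub_le_of_norm_hasDerivWithin_le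
      (f := g) (f' := g1) (fun y hy => (hg y).hasDerivWithinAt) hstep1
      (Set.left_mem_Icc.mpr hD0) (Set.right_mem_Icc.mpr hD0)
    calc ‖g D - g 0‖ ≤ M2 * D * ‖D - 0‖ := key
      _ = M2 * D * D := by rw [sub_zero, Real.norm_eq_abs, abs_of_nonneg hD0]
  have hgD : g D = μ (x+d) + μ (x-d) := by
    rcases abs_cases d with ⟨he, _⟩ | ⟨he, _⟩
    · rw [hDdef, he]
    · rw [hDdef, he]
      simp [hgdef, sub_eq_add_neg, add_comm]
  have hg0 : g 0 = 2 * μ x := by simp [hgdef]; ring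
  have hfinal : |2 * μ x - μ (x+d) - μ (x-d)| = ‖g D - g 0‖ := by
    rw [hg0, hgD, Real.norm_eq_abs, abs_sub_comm]
    congr 1
    ring
  rw [hfinal]
  calc ‖g D - g 0‖ ≤ M2 * D * D := hstep2
    _ = 64 * Cμ * d^2 * jbr x ^ (-(1+α)) := by
        rw [hM2def, hDdef]
        have : |d| * |d| = d^2 := by rw [← abs_mul, ← sq, abs_of_nonneg (sq_nonneg d)]
        nlinarith [this]

lemma fiber_bound {α h Cμ B : ℝ} {μ : ℝ → ℝ} {β : ℤ → ℝ}
    (hα0 : 0 < α) (hα2 : α < 2) (h0 : 0 < h) (h1 : h ≤ 1) (hC : 0 ≤ Cμ)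
    (hμreg : ContDiff ℝ 2 μ)
    (hμbd : ∀ v : ℝ, |μ v| ≤ Cμ * jbr v ^ (-(1 + α)))
    (hμ'' : ∀ v : ℝ, |deriv (deriv μ) v| ≤ Cμ * jbr v ^ (-(3 + α)))
    (hB : 0 ≤ B)
    (hβ : ∀ k : ℤ, k ≠ 0 → 0 ≤ β k ∧ β k ≤ B * |h * (k : ℝ)| ^ (-(1 + α)))
    (ℓ : ℤ) :
    Summable (fun k : ℤ => if ℓ = 0 then (0:ℝ) else
        β ℓ * |2 * μ ((k : ℝ) * h) - μ (((k + ℓ : ℤ) : ℝ) * h) - μ (((k - ℓ : ℤ) : ℝ) * h)| * h ^ 2) ∧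
    ∑' k : ℤ, (if ℓ = 0 then (0:ℝ) else
        β ℓ * |2 * μ ((k : ℝ) * h) - μ (((k + ℓ : ℤ) : ℝ) * h) - μ (((k - ℓ : ℤ) : ℝ) * h)| * h ^ 2)
      ≤ (64*Cμ*B*(6+2/α)*h) *
        (if ℓ = 0 then (0:ℝ) else min (|h*(ℓ:ℝ)|^2) 1 * |h*(ℓ:ℝ)| ^ (-(1+α))) := by
  rcases eq_or_ne ℓ 0 with rfl | hℓ0
  · constructor
    · simpa using summable_zero
    · simp
  obtain ⟨hWsum, hWbd⟩ := sumW (α := α) (h := h) hα0 hα2 h0 h1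
  set W : ℤ → ℝ := fun k => jbr ((k:ℝ)*h) ^ (-(1+α)) with hWdef
  obtain ⟨hβ0, hβB⟩ := hβ ℓ hℓ0
  have hℓr : ((ℓ:ℝ)) ≠ 0 := Int.cast_ne_zero.mpr hℓ0
  have habs_pos : 0 < |h*(ℓ:ℝ)| := abs_pos.mpr (mul_ne_zero (ne_of_gt h0) hℓr)
  have hrpow_pos : 0 < |h*(ℓ:ℝ)| ^ (-(1+α)) := Real.rpow_pos_of_pos habs_pos _
  have hWpos : ∀ k, 0 ≤ W k := fun k => Real.rpow_nonneg (le_of_lt (jbr_pos _)) _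
  have hA : (0:ℝ) < 6 + 2/α := by positivity
  have hcastp : ∀ k : ℤ, ((k + ℓ : ℤ) : ℝ) * h = (k:ℝ)*h + (ℓ:ℝ)*h := by
    intro k; push_cast; ring
  have hcastm : ∀ k : ℤ, ((k - ℓ : ℤ) : ℝ) * h = (k:ℝ)*h - (ℓ:ℝ)*h := by
    intro k; push_cast; ring
  have hdabs : |(ℓ:ℝ)*h| = |h*(ℓ:ℝ)| := by rw [mul_comm]
  have hnonneg : ∀ k : ℤ, 0 ≤ β ℓ * |2 * μ ((k : ℝ) * h) - μ (((k + ℓ : ℤ) : ℝ) * h)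
      - μ (((k - ℓ : ℤ) : ℝ) * h)| * h ^ 2 := by
    intro k; positivity
  simp only [if_neg hℓ0]
  rcases le_or_gt (|h*(ℓ:ℝ)|) 1 with hsmall | hlarge
  · -- small case
    set c : ℝ := β ℓ * h ^ 2 * (64 * Cμ * ((ℓ:ℝ)*h)^2) with hcdef
    have hc0 : 0 ≤ c := by positivity
    have hpt : ∀ k : ℤ, β ℓ * |2 * μ ((k : ℝ) * h) - μ (((k + ℓ : ℤ) : ℝ) * h)
        - μ (((k - ℓ : ℤ) : ℝ) * h)| * h ^ 2 ≤ c * W k := by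
      intro k
      have hsd := second_diff hμreg hα0 hα2 hC hμ'' ((k:ℝ)*h) ((ℓ:ℝ)*h)
        (by rw [hdabs]; exact hsmall)
      rw [hcastp k, hcastm k]
      calc β ℓ * |2 * μ ((k:ℝ)*h) - μ ((k:ℝ)*h + (ℓ:ℝ)*h) - μ ((k:ℝ)*h - (ℓ:ℝ)*h)| * h ^ 2
          ≤ β ℓ * (64 * Cμ * ((ℓ:ℝ)*h)^2 * jbr ((k:ℝ)*h) ^ (-(1+α))) * h ^ 2 := by
            apply mul_le_mul_of_nonneg_right _ (sq_nonneg h)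
            exact mul_le_mul_of_nonneg_left hsd hβ0
        _ = c * W k := by rw [hcdef, hWdef]; ring
    have hmaj : Summable (fun k : ℤ => c * W k) := hWsum.mul_left c
    have hsum : Summable (fun k : ℤ => β ℓ * |2 * μ ((k : ℝ) * h) - μ (((k + ℓ : ℤ) : ℝ) * h)
        - μ (((k - ℓ : ℤ) : ℝ) * h)| * h ^ 2) :=
      Summable.of_nonneg_of_le hnonneg hpt hmaj
    refine ⟨hsum, ?_⟩
    have hmin : min (|h*(ℓ:ℝ)|^2) 1 = |h*(ℓ:ℝ)|^2 := by
      apply min_eq_left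
      nlinarith [habs_pos]
    rw [hmin]
    calc ∑' k : ℤ, β ℓ * |2 * μ ((k : ℝ) * h) - μ (((k + ℓ : ℤ) : ℝ) * h)
          - μ (((k - ℓ : ℤ) : ℝ) * h)| * h ^ 2
        ≤ ∑' k : ℤ, c * W k := Summable.tsum_le_tsum hpt hsum hmaj
      _ = c * ∑' k : ℤ, W k := tsum_mul_left
      _ ≤ c * ((6+2/α)/h) := mul_le_mul_of_nonneg_left hWbd hc0
      _ ≤ (64*Cμ*B*(6+2/α)*h) * (|h*(ℓ:ℝ)|^2 * |h*(ℓ:ℝ)| ^ (-(1+α))) := by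
          rw [hcdef]
          have hsq : ((ℓ:ℝ)*h)^2 = |h*(ℓ:ℝ)|^2 := by
            rw [← hdabs, sq_abs]
          rw [hsq]
          have key : β ℓ * (64 * Cμ * (6+2/α) * h * |h*(ℓ:ℝ)|^2)
              ≤ (B * |h*(ℓ:ℝ)| ^ (-(1+α))) * (64 * Cμ * (6+2/α) * h * |h*(ℓ:ℝ)|^2) := by
            apply mul_le_mul_of_nonneg_right hβB (by positivity)
          have e1 : β ℓ * h ^ 2 * (64 * Cμ * |h*(ℓ:ℝ)|^2) * ((6+2/α)/h)
              = β ℓ * (64 * Cμ * (6+2/α) * h * |h*(ℓ:ℝ)|^2) := by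
            field_simp
          have e2 : (64*Cμ*B*(6+2/α)*h) * (|h*(ℓ:ℝ)|^2 * |h*(ℓ:ℝ)| ^ (-(1+α)))
              = (B * |h*(ℓ:ℝ)| ^ (-(1+α))) * (64 * Cμ * (6+2/α) * h * |h*(ℓ:ℝ)|^2) := by
            ring
          rw [e1, e2]
          exact key
  · -- large case
    have hmin : min (|h*(ℓ:ℝ)|^2) 1 = 1 := min_eq_right (by nlinarith)
    rw [hmin, one_mul]
    set c1 : ℝ := β ℓ * h^2 * (2*Cμ) with hc1
    set c2 : ℝ := β ℓ * h^2 * Cμ with hc2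
    have hc10 : 0 ≤ c1 := by positivity
    have hc20 : 0 ≤ c2 := by positivity
    have hWp : Summable (fun k : ℤ => W (k + ℓ)) :=
      ((Equiv.addRight ℓ).summable_iff (f := W)).mpr hWsum
    have hWm : Summable (fun k : ℤ => W (k - ℓ)) :=
      ((Equiv.subRight ℓ).summable_iff (f := W)).mpr hWsum
    set m : ℤ → ℝ := fun k => (c1 * W k + c2 * W (k+ℓ)) + c2 * W (k-ℓ) with hmdef
    have hm1 : Summable (fun k : ℤ => c1 * W k + c2 * W (k+ℓ)) :=
      (hWsum.mul_left c1).add (hWp.mul_left c2)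
    have hmsum : Summable m := hm1.add (hWm.mul_left c2)
    have hpt : ∀ k : ℤ, β ℓ * |2 * μ ((k : ℝ) * h) - μ (((k + ℓ : ℤ) : ℝ) * h)
        - μ (((k - ℓ : ℤ) : ℝ) * h)| * h ^ 2 ≤ m k := by
      intro k
      have b1 := hμbd ((k:ℝ)*h)
      have b2 := hμbd (((k + ℓ : ℤ):ℝ)*h)
      have b3 := hμbd (((k - ℓ : ℤ):ℝ)*h)
      have habs3 : |2 * μ ((k : ℝ) * h) - μ (((k + ℓ : ℤ) : ℝ) * h) - μ (((k - ℓ : ℤ) : ℝ) * h)|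
          ≤ 2 * |μ ((k:ℝ)*h)| + |μ (((k + ℓ : ℤ):ℝ)*h)| + |μ (((k - ℓ : ℤ):ℝ)*h)| := by
        rw [abs_le]
        have l1 := le_abs_self (μ ((k:ℝ)*h)); have l2 := neg_abs_le (μ ((k:ℝ)*h))
        have l3 := le_abs_self (μ (((k + ℓ : ℤ):ℝ)*h)); have l4 := neg_abs_le (μ (((k + ℓ : ℤ):ℝ)*h))
        have l5 := le_abs_self (μ (((k - ℓ : ℤ):ℝ)*h)); have l6 := neg_abs_le (μ (((k - ℓ : ℤ):ℝ)*h))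
        constructor <;> linarith
      have hWpk : Cμ * jbr (((k + ℓ : ℤ):ℝ)*h) ^ (-(1+α)) = c2 * W (k+ℓ) / (β ℓ * h^2) ∨ True := Or.inr trivial
      calc β ℓ * |2 * μ ((k : ℝ) * h) - μ (((k + ℓ : ℤ) : ℝ) * h) - μ (((k - ℓ : ℤ) : ℝ) * h)| * h ^ 2
          ≤ β ℓ * (2 * (Cμ * jbr ((k:ℝ)*h) ^ (-(1+α))) + Cμ * jbr (((k + ℓ : ℤ):ℝ)*h) ^ (-(1+α))
            + Cμ * jbr (((k - ℓ : ℤ):ℝ)*h) ^ (-(1+α))) * h ^ 2 := by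
            apply mul_le_mul_of_nonneg_right _ (sq_nonneg h)
            apply mul_le_mul_of_nonneg_left _ hβ0
            calc |2 * μ ((k : ℝ) * h) - μ (((k + ℓ : ℤ) : ℝ) * h) - μ (((k - ℓ : ℤ) : ℝ) * h)|
                ≤ 2 * |μ ((k:ℝ)*h)| + |μ (((k + ℓ : ℤ):ℝ)*h)| + |μ (((k - ℓ : ℤ):ℝ)*h)| := habs3
              _ ≤ _ := by gcongr
        _ = m k := by
            rw [hmdef, hWdef, hc1, hc2]
            simp only []
            push_cast
            ring
    have hsum : Summable (fun k : ℤ => β ℓ * |2 * μ ((k : ℝ) * h) - μ (((k + ℓ : ℤ) : ℝ) * h)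
        - μ (((k - ℓ : ℤ) : ℝ) * h)| * h ^ 2) :=
      Summable.of_nonneg_of_le hnonneg hpt hmsum
    refine ⟨hsum, ?_⟩
    have ep : ∑' k : ℤ, W (k+ℓ) = ∑' k : ℤ, W k := by
      have := (Equiv.addRight ℓ).tsum_eq W
      simpa using this
    have em : ∑' k : ℤ, W (k-ℓ) = ∑' k : ℤ, W k := by
      have := (Equiv.subRight ℓ).tsum_eq W
      simpa using this
    have htm : ∑' k : ℤ, m k = (c1 + c2 + c2) * ∑' k : ℤ, W k := by
      rw [hmdef]
      rw [Summable.tsum_add hm1 (hWm.mul_left c2), Summable.tsum_add (hWsum.mul_left c1) (hWp.mul_left c2)]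
      rw [tsum_mul_left, tsum_mul_left, tsum_mul_left, ep, em]
      ring
    calc ∑' k : ℤ, β ℓ * |2 * μ ((k : ℝ) * h) - μ (((k + ℓ : ℤ) : ℝ) * h)
          - μ (((k - ℓ : ℤ) : ℝ) * h)| * h ^ 2
        ≤ ∑' k : ℤ, m k := Summable.tsum_le_tsum hpt hsum hmsum
      _ = (c1 + c2 + c2) * ∑' k : ℤ, W k := htm
      _ ≤ (c1 + c2 + c2) * ((6+2/α)/h) := by
          apply mul_le_mul_of_nonneg_left hWbd (by positivity)
      _ ≤ (64*Cμ*B*(6+2/α)*h) * |h*(ℓ:ℝ)| ^ (-(1+α)) := by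
          have e1 : (c1 + c2 + c2) * ((6+2/α)/h) = β ℓ * (4*Cμ*(6+2/α)*h) := by
            rw [hc1, hc2]; field_simp; ring
          have key : β ℓ * (4*Cμ*(6+2/α)*h) ≤ (B * |h*(ℓ:ℝ)| ^ (-(1+α))) * (4*Cμ*(6+2/α)*h) :=
            mul_le_mul_of_nonneg_right hβB (by positivity)
          have e2 : (B * |h*(ℓ:ℝ)| ^ (-(1+α))) * (4*Cμ*(6+2/α)*h) * 16
              = (64*Cμ*B*(6+2/α)*h) * |h*(ℓ:ℝ)| ^ (-(1+α)) := by ring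
          have hx0 : 0 ≤ (B * |h*(ℓ:ℝ)| ^ (-(1+α))) * (4*Cμ*(6+2/α)*h) := by positivity
          rw [e1, ← e2]
          nlinarith

/-- uniform bound on
`S̃ = ∑_{k, ℓ≠0} β_ℓ^h |2M_k - M_{k+ℓ} - M_{k-ℓ}| h²` with `M_j = μ_α(jh)`, and vanishing
of the corresponding signed sum. -/
theorem stmt17 (α : ℝ) (hα0 : 0 < α) (hα2 : α < 2)
    (μ : ℝ → ℝ) (hμreg : ContDiff ℝ 2 μ) (Cμ : ℝ)
    (hμbd : ∀ v : ℝ, |μ v| ≤ Cμ * jbr v ^ (-(1 + α)))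
    (hμ'' : ∀ v : ℝ, |deriv (deriv μ) v| ≤ Cμ * jbr v ^ (-(3 + α)))
    (b B : ℝ) (hb : 0 < b) (hbB : b ≤ B) :
    ∃ C > 0, ∀ h : ℝ, 0 < h → h ≤ 1 → ∀ β : ℤ → ℝ,
      (∀ k : ℤ, k ≠ 0 → b * |h * (k : ℝ)| ^ (-(1 + α)) ≤ β k ∧
        β k ≤ B * |h * (k : ℝ)| ^ (-(1 + α))) →
      Summable (fun p : ℤ × ℤ =>
        if p.2 = 0 then 0
        else β p.2 * |2 * μ ((p.1 : ℝ) * h) - μ (((p.1 + p.2 : ℤ) : ℝ) * h)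
          - μ (((p.1 - p.2 : ℤ) : ℝ) * h)| * h ^ 2) ∧
      (∑' p : ℤ × ℤ,
        (if p.2 = 0 then 0
        else β p.2 * |2 * μ ((p.1 : ℝ) * h) - μ (((p.1 + p.2 : ℤ) : ℝ) * h)
          - μ (((p.1 - p.2 : ℤ) : ℝ) * h)| * h ^ 2)) ≤ C ∧
      (∑' p : ℤ × ℤ,
        (if p.2 = 0 then 0
        else β p.2 * (2 * μ ((p.1 : ℝ) * h) - μ (((p.1 + p.2 : ℤ) : ℝ) * h)
          - μ (((p.1 - p.2 : ℤ) : ℝ) * h)) * h ^ 2)) = 0 := by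
  have hC : 0 ≤ Cμ := by
    have h1 := hμbd 0
    have hp : 0 < jbr (0:ℝ) ^ (-(1+α)) := Real.rpow_pos_of_pos (jbr_pos 0) _
    nlinarith [abs_nonneg (μ 0)]
  have hB : 0 ≤ B := le_trans (le_of_lt hb) hbB
  have h2α : (0:ℝ) < 2 - α := by linarith
  refine ⟨64*Cμ*B*(6+2/α)*(2*(20/(2-α)+4+1/α)) + 1, by positivity, ?_⟩
  intro h h0 h1 β hβ
  have hβ' : ∀ k : ℤ, k ≠ 0 → 0 ≤ β k ∧ β k ≤ B * |h * (k : ℝ)| ^ (-(1 + α)) := by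
    intro k hk
    obtain ⟨hl, hu⟩ := hβ k hk
    have hp : 0 < |h * (k:ℝ)| ^ (-(1+α)) :=
      Real.rpow_pos_of_pos (abs_pos.mpr (mul_ne_zero (ne_of_gt h0) (Int.cast_ne_zero.mpr hk))) _
    exact ⟨le_trans (by positivity) hl, hu⟩
  have fiber := fun ℓ : ℤ => fiber_bound hα0 hα2 h0 h1 hC hμreg hμbd hμ'' hB hβ' ℓ
  obtain ⟨hUsum, hUbd⟩ := sumU (α := α) (h := h) hα0 hα2 h0 h1
  set G : ℤ → ℝ := fun ℓ => (64*Cμ*B*(6+2/α)*h) *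
    (if ℓ = 0 then (0:ℝ) else min (|h*(ℓ:ℝ)|^2) 1 * |h*(ℓ:ℝ)| ^ (-(1+α))) with hGdef
  have hGsum : Summable G := hUsum.mul_left _
  have hGbd : ∑' ℓ : ℤ, G ℓ ≤ 64*Cμ*B*(6+2/α)*(2*(20/(2-α)+4+1/α)) := by
    rw [hGdef, tsum_mul_left]
    calc (64*Cμ*B*(6+2/α)*h) * ∑' ℓ : ℤ, (if ℓ = 0 then (0:ℝ) else
          min (|h*(ℓ:ℝ)|^2) 1 * |h*(ℓ:ℝ)| ^ (-(1+α)))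
        ≤ (64*Cμ*B*(6+2/α)*h) * ((2*(20/(2-α)+4+1/α))/h) := by
          apply mul_le_mul_of_nonneg_left hUbd (by positivity)
      _ = 64*Cμ*B*(6+2/α)*(2*(20/(2-α)+4+1/α)) := by field_simp
  --- abs part
  set F2 : ℤ × ℤ → ℝ := fun q =>
    if q.1 = 0 then 0
    else β q.1 * |2 * μ ((q.2 : ℝ) * h) - μ (((q.2 + q.1 : ℤ) : ℝ) * h)
      - μ (((q.2 - q.1 : ℤ) : ℝ) * h)| * h ^ 2 with hF2def
  have hF2nonneg : 0 ≤ F2 := by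
    intro q
    rcases eq_or_ne q.1 0 with hq | hq
    · simp [hF2def, hq]
    · simp only [hF2def, if_neg hq]
      have := (hβ' q.1 hq).1
      positivity
  have hfib_summ : ∀ ℓ : ℤ, Summable fun k : ℤ => F2 (ℓ, k) := fun ℓ => (fiber ℓ).1
  have hfib_bd : ∀ ℓ : ℤ, ∑' k : ℤ, F2 (ℓ, k) ≤ G ℓ := fun ℓ => (fiber ℓ).2
  have hfibsums_summ : Summable (fun ℓ : ℤ => ∑' k : ℤ, F2 (ℓ, k)) := by
    apply Summable.of_nonneg_of_le _ hfib_bd hGsum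
    intro ℓ
    exact tsum_nonneg (fun k => hF2nonneg (ℓ, k))
  have hF2sum : Summable F2 :=
    (summable_prod_of_nonneg hF2nonneg).mpr ⟨hfib_summ, hfibsums_summ⟩
  have hswap : ∀ p : ℤ × ℤ, F2 ((Equiv.prodComm ℤ ℤ) p) =
      (if p.2 = 0 then 0
        else β p.2 * |2 * μ ((p.1 : ℝ) * h) - μ (((p.1 + p.2 : ℤ) : ℝ) * h)
          - μ (((p.1 - p.2 : ℤ) : ℝ) * h)| * h ^ 2) := fun p => rfl
  have hFasum : Summable (fun p : ℤ × ℤ =>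
      if p.2 = 0 then 0
      else β p.2 * |2 * μ ((p.1 : ℝ) * h) - μ (((p.1 + p.2 : ℤ) : ℝ) * h)
        - μ (((p.1 - p.2 : ℤ) : ℝ) * h)| * h ^ 2) := by
    have := ((Equiv.prodComm ℤ ℤ).summable_iff (f := F2)).mpr hF2sum
    exact this.congr hswap
  refine ⟨hFasum, ?_, ?_⟩
  · -- tsum bound
    have e1 : (∑' p : ℤ × ℤ,
        (if p.2 = 0 then 0
        else β p.2 * |2 * μ ((p.1 : ℝ) * h) - μ (((p.1 + p.2 : ℤ) : ℝ) * h)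
          - μ (((p.1 - p.2 : ℤ) : ℝ) * h)| * h ^ 2)) = ∑' q : ℤ × ℤ, F2 q := by
      rw [← (Equiv.prodComm ℤ ℤ).tsum_eq F2]
      exact tsum_congr hswap
    rw [e1, Summable.tsum_prod' hF2sum hfib_summ]
    calc ∑' ℓ : ℤ, ∑' k : ℤ, F2 (ℓ, k) ≤ ∑' ℓ : ℤ, G ℓ :=
          Summable.tsum_le_tsum hfib_bd hfibsums_summ hGsum
      _ ≤ 64*Cμ*B*(6+2/α)*(2*(20/(2-α)+4+1/α)) := hGbd
      _ ≤ 64*Cμ*B*(6+2/α)*(2*(20/(2-α)+4+1/α)) + 1 := by linarith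
  · -- signed part
    set F2s : ℤ × ℤ → ℝ := fun q =>
      if q.1 = 0 then 0
      else β q.1 * (2 * μ ((q.2 : ℝ) * h) - μ (((q.2 + q.1 : ℤ) : ℝ) * h)
        - μ (((q.2 - q.1 : ℤ) : ℝ) * h)) * h ^ 2 with hF2sdef
    have habs_eq : ∀ q : ℤ × ℤ, |F2s q| = F2 q := by
      intro q
      rcases eq_or_ne q.1 0 with hq | hq
      · simp [hF2sdef, hF2def, hq]
      · simp only [hF2sdef, hF2def, if_neg hq]
        rw [abs_mul, abs_mul, abs_of_nonneg (hβ' q.1 hq).1,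
          abs_of_nonneg (sq_nonneg h)]
    have hF2s_sum : Summable F2s := by
      apply Summable.of_norm
      have : (fun q : ℤ × ℤ => ‖F2s q‖) = F2 := by
        funext q; rw [Real.norm_eq_abs, habs_eq q]
      rw [this]; exact hF2sum
    have hfibs_summ : ∀ ℓ : ℤ, Summable fun k : ℤ => F2s (ℓ, k) := by
      intro ℓ
      apply Summable.of_norm
      have : (fun k : ℤ => ‖F2s (ℓ, k)‖) = fun k => F2 (ℓ, k) := by
        funext k; rw [Real.norm_eq_abs, habs_eq (ℓ, k)]
      rw [this]; exact hfib_summ ℓ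
    have hswap2 : ∀ p : ℤ × ℤ, F2s ((Equiv.prodComm ℤ ℤ) p) =
        (if p.2 = 0 then 0
          else β p.2 * (2 * μ ((p.1 : ℝ) * h) - μ (((p.1 + p.2 : ℤ) : ℝ) * h)
            - μ (((p.1 - p.2 : ℤ) : ℝ) * h)) * h ^ 2) := fun p => rfl
    have e1 : (∑' p : ℤ × ℤ,
        (if p.2 = 0 then 0
        else β p.2 * (2 * μ ((p.1 : ℝ) * h) - μ (((p.1 + p.2 : ℤ) : ℝ) * h)
          - μ (((p.1 - p.2 : ℤ) : ℝ) * h)) * h ^ 2)) = ∑' q : ℤ × ℤ, F2s q := by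
      rw [← (Equiv.prodComm ℤ ℤ).tsum_eq F2s]
      exact tsum_congr hswap2
    rw [e1, Summable.tsum_prod' hF2s_sum hfibs_summ]
    have hinner : ∀ ℓ : ℤ, ∑' k : ℤ, F2s (ℓ, k) = 0 := by
      intro ℓ
      rcases eq_or_ne ℓ 0 with rfl | hℓ0
      · simp [hF2sdef]
      obtain ⟨hWsum2, _⟩ := sumW (α := α) (h := h) hα0 hα2 h0 h1
      set ν : ℤ → ℝ := fun j => μ ((j:ℝ)*h) with hνdef
      have hν_abs : Summable (fun j : ℤ => |ν j|) :=
        Summable.of_nonneg_of_le (fun j => abs_nonneg _)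
          (fun j => hμbd ((j:ℝ)*h)) (hWsum2.mul_left Cμ)
      have hνsum : Summable ν := by
        apply Summable.of_norm
        simpa [Real.norm_eq_abs] using hν_abs
      have hνp : Summable (fun k : ℤ => ν (k+ℓ)) :=
        ((Equiv.addRight ℓ).summable_iff (f := ν)).mpr hνsum
      have hνm : Summable (fun k : ℤ => ν (k-ℓ)) :=
        ((Equiv.subRight ℓ).summable_iff (f := ν)).mpr hνsum
      have hfa : (fun k : ℤ => F2s (ℓ, k))
          = fun k : ℤ => (β ℓ * h^2) * (2 * ν k - ν (k+ℓ) - ν (k-ℓ)) := by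
        funext k
        simp only [hF2sdef, hνdef, if_neg hℓ0]
        ring
      rw [hfa, tsum_mul_left]
      have hzero : ∑' k : ℤ, (2 * ν k - ν (k+ℓ) - ν (k-ℓ)) = 0 := by
        have h12 : Summable (fun k : ℤ => 2 * ν k - ν (k+ℓ)) := (hνsum.mul_left 2).sub hνp
        have hr : (fun k : ℤ => 2 * ν k - ν (k+ℓ) - ν (k-ℓ))
            = fun k : ℤ => (2 * ν k - ν (k+ℓ)) - ν (k-ℓ) := rfl
        rw [hr, Summable.tsum_sub h12 hνm, Summable.tsum_sub (hνsum.mul_left 2) hνp, tsum_mul_left]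
        have ep : ∑' k : ℤ, ν (k+ℓ) = ∑' k : ℤ, ν k := by
          simpa using (Equiv.addRight ℓ).tsum_eq ν
        have em : ∑' k : ℤ, ν (k-ℓ) = ∑' k : ℤ, ν k := by
          simpa using (Equiv.subRight ℓ).tsum_eq ν
        rw [ep, em]; ring
      rw [hzero, mul_zero]
    rw [tsum_congr hinner, tsum_zero]
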